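/- In the gap-recovery setup, define the projections P∥(M) = QQᵀM + MQQᵀ − QQᵀMQQᵀ and P⊥(M) = (I − QQᵀ)M(I − QQᵀ). Then for any matrix W ∈ ℝ^{n×n} and any Y ∈ F_n: |⟨Ȳ − Y, W⟩| ≤ ‖P∥(W)‖_∞ · ‖J̄ ∘ (Y − Ȳ)‖_1 + ‖W‖_op · tr((I − QQᵀ)·Y·(I − QQᵀ)). (The last trace equals the nuclear norm of P⊥(Y − Ȳ) = (I − QQᵀ)Y(I − QQᵀ), which is positive semidefinite.) -/

import Mathlib

open Matrix

/-- Feasible set of the recovery SDP: symmetric PSD matrices with entries in `[0,1]`. -/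
def FeasSDP {d : ℕ} (Y : Matrix (Fin d) (Fin d) ℝ) : Prop :=
  Y.PosSemidef ∧ ∀ i j, 0 ≤ Y i j ∧ Y i j ≤ 1

/-- Entrywise ℓ¹ norm of a matrix. -/
noncomputable def l1Norm {n : ℕ} (X : Matrix (Fin n) (Fin n) ℝ) : ℝ :=
  ∑ i, ∑ j, |X i j|

/-- Entrywise ℓ∞ norm (maximum absolute entry) of a matrix, via the sup norm
on the underlying function type. -/
noncomputable def linfNorm {n : ℕ} (X : Matrix (Fin n) (Fin n) ℝ) : ℝ :=
  ‖Matrix.of.symm X‖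

/-- The ℓ²→ℓ² operator norm (largest singular value) of a real matrix. -/
noncomputable def opNorm {m n : ℕ} (M : Matrix (Fin m) (Fin n) ℝ) : ℝ :=
  ‖(Matrix.toEuclideanLin M).toContinuousLinearMap‖

/-- Trace inner product `⟨X, Y⟩ = Σ_{i,j} X_{ij} Y_{ij}`. -/
noncomputable def mip {d : ℕ} (X Y : Matrix (Fin d) (Fin d) ℝ) : ℝ :=
  ∑ i, ∑ j, X i j * Y i j

open scoped MatrixOrder in
lemma mip_psd_le {d : ℕ} (Z W : Matrix (Fin d) (Fin d) ℝ) (hZ : Z.PosSemidef) :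
    |mip Z W| ≤ opNorm W * Z.trace := by
  set A := CFC.sqrt Z with hAdef
  have hA : A.PosSemidef := (CFC.sqrt_nonneg Z).posSemidef
  have hAsymm : ∀ i j, A j i = A i j := by
    intro i j
    have := congrFun (congrFun hA.1 i) j
    simpa [Matrix.conjTranspose_apply] using this
  have hAA : A * A = Z := CFC.sqrt_mul_sqrt_self Z hZ.nonneg
  set x : Fin d → EuclideanSpace ℝ (Fin d) := fun i => (WithLp.equiv 2 _).symm (A i) with hx
  set L := (Matrix.toEuclideanLin W).toContinuousLinearMap with hL
  have hLapp : ∀ v : EuclideanSpace ℝ (Fin d),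
      L v = (WithLp.equiv 2 _).symm (W *ᵥ ((WithLp.equiv 2 _) v)) := fun v => rfl
  have hinner : ∀ k, (inner ℝ (x k) (L (x k)) : ℝ) = ∑ i, ∑ j, A k i * (W i j * A k j) := by
    intro k
    rw [hLapp]
    simp [hx, PiLp.inner_apply, RCLike.inner_apply, Matrix.mulVec, dotProduct,
      Finset.mul_sum, Finset.sum_mul]
    exact Finset.sum_congr rfl fun i _ => Finset.sum_congr rfl fun j _ => by ring
  have key : mip Z W = ∑ k, (inner ℝ (x k) (L (x k)) : ℝ) := by
    simp only [hinner]
    calc mip Z W = ∑ i, ∑ j, ∑ k, A k i * (W i j * A k j) := by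
          rw [← hAA]; simp only [mip, Matrix.mul_apply, Finset.sum_mul]
          exact Finset.sum_congr rfl fun i _ => Finset.sum_congr rfl fun j _ =>
            Finset.sum_congr rfl fun k _ => by rw [hAsymm i k]; ring
      _ = ∑ i, ∑ k, ∑ j, A k i * (W i j * A k j) :=
          Finset.sum_congr rfl fun i _ => Finset.sum_comm
      _ = ∑ k, ∑ i, ∑ j, A k i * (W i j * A k j) := Finset.sum_comm
  have hnormsq : ∀ k, (‖x k‖ : ℝ) ^ 2 = ∑ j, A k j * A k j := by
    intro k
    rw [← real_inner_self_eq_norm_sq]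
    simp only [hx, PiLp.inner_apply, RCLike.inner_apply]
    simp [mul_comm]
  have htr : Z.trace = ∑ k, ‖x k‖ ^ 2 := by
    simp only [hnormsq, ← hAA, Matrix.trace, Matrix.diag, Matrix.mul_apply]
    exact Finset.sum_congr rfl fun k _ => Finset.sum_congr rfl fun j _ => by rw [hAsymm k j]
  have hbound : ∀ k, |(inner ℝ (x k) (L (x k)) : ℝ)| ≤ ‖L‖ * ‖x k‖ ^ 2 := by
    intro k
    calc |(inner ℝ (x k) (L (x k)) : ℝ)| ≤ ‖x k‖ * ‖L (x k)‖ := abs_real_inner_le_norm _ _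
      _ ≤ ‖x k‖ * (‖L‖ * ‖x k‖) := by
          exact mul_le_mul_of_nonneg_left (L.le_opNorm _) (norm_nonneg _)
      _ = ‖L‖ * ‖x k‖ ^ 2 := by ring
  calc |mip Z W| ≤ ∑ k, |(inner ℝ (x k) (L (x k)) : ℝ)| := by
        rw [key]; exact Finset.abs_sum_le_sum_abs _ _
    _ ≤ ∑ k, ‖L‖ * ‖x k‖ ^ 2 := Finset.sum_le_sum fun k _ => hbound k
    _ = opNorm W * Z.trace := by rw [htr, Finset.mul_sum, opNorm]

lemma mip_add_right {d : ℕ} (X A B : Matrix (Fin d) (Fin d) ℝ) :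
    mip X (A + B) = mip X A + mip X B := by
  simp [mip, mul_add, Finset.sum_add_distrib]

lemma mip_neg_left {d : ℕ} (X Y : Matrix (Fin d) (Fin d) ℝ) :
    mip (-X) Y = - mip X Y := by
  simp [mip, Matrix.neg_apply]

lemma mip_eq_trace {d : ℕ} (X Y : Matrix (Fin d) (Fin d) ℝ) :
    mip X Y = (Xᵀ * Y).trace := by
  simp only [mip, Matrix.trace, Matrix.diag, Matrix.mul_apply, Matrix.transpose_apply]
  rw [Finset.sum_comm]

lemma mip_conj {d : ℕ} (A Q W : Matrix (Fin d) (Fin d) ℝ) (hQ : Qᵀ = Q) :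
    mip A (Q * W * Q) = mip (Q * A * Q) W := by
  rw [mip_eq_trace, mip_eq_trace]
  rw [Matrix.transpose_mul, Matrix.transpose_mul, hQ]
  rw [show Q * (Aᵀ * Q) * W = Q * (Aᵀ * (Q * W)) from by noncomm_ring,
    Matrix.trace_mul_comm Q (Aᵀ * (Q * W)),
    show Aᵀ * (Q * W) * Q = Aᵀ * (Q * W * Q) from by noncomm_ring]

lemma entry_le_linf {n : ℕ} (X : Matrix (Fin n) (Fin n) ℝ) (i j : Fin n) :
    |X i j| ≤ linfNorm X := by
  have h1 : ‖Matrix.of.symm X i‖ ≤ ‖Matrix.of.symm X‖ := norm_le_pi_norm _ i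
  have h2 : ‖Matrix.of.symm X i j‖ ≤ ‖Matrix.of.symm X i‖ := norm_le_pi_norm _ j
  calc |X i j| = ‖Matrix.of.symm X i j‖ := (Real.norm_eq_abs _).symm
    _ ≤ linfNorm X := h2.trans h1

/-- Noise term bound in the gap-recovery setup, with
`P∥(W) = QQᵀW + WQQᵀ − QQᵀWQQᵀ` (where `P = QQᵀ`): for any `W` and `Y ∈ F_n`,
`|⟨Ȳ − Y, W⟩| ≤ ‖P∥(W)‖_∞·‖J̄∘(Y−Ȳ)‖₁ + ‖W‖_op·tr((I−QQᵀ)Y(I−QQᵀ))`. -/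
theorem gap_recovery_noise_term_bound
    {n K : ℕ} (s : Fin K → ℕ) (hs : Antitone s) (hspos : ∀ k, 0 < s k)
    (c : Fin n → Fin K) (hc : Monotone c)
    (hcount : ∀ k, (Finset.univ.filter fun i => c i = k).card = s k)
    (r : Fin K)
    (P Yb Jbar : Matrix (Fin n) (Fin n) ℝ)
    (hP : P = Matrix.of fun i j =>
      if c i = c j ∧ c i ≤ r then (1 : ℝ) / (s (c i) : ℝ) else 0)
    (hYb : Yb = Matrix.of fun i j => if c i = c j ∧ c i ≤ r then (1 : ℝ) else 0)
    (hJbar : Jbar = Matrix.of fun i j => if c i ≤ r ∨ c j ≤ r then (1 : ℝ) else 0)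
    (W : Matrix (Fin n) (Fin n) ℝ)
    (Y : Matrix (Fin n) (Fin n) ℝ) (hY : FeasSDP Y) :
    |mip (Yb - Y) W| ≤
      linfNorm (P * W + W * P - P * W * P) * l1Norm (Matrix.hadamard Jbar (Y - Yb)) +
        opNorm W * ((1 - P) * Y * (1 - P)).trace := by
  have hPsymm : Pᵀ = P := by
    subst hP; ext i j
    simp only [Matrix.transpose_apply, Matrix.of_apply]
    by_cases h : c i = c j
    · rw [h]
    · rw [if_neg (by tauto), if_neg (by tauto)]
  have hQsymm : (1 - P)ᵀ = 1 - P := by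
    rw [Matrix.transpose_sub, Matrix.transpose_one, hPsymm]
  have hPYb : P * Yb = Yb := by
    subst hP; subst hYb; ext i j
    rw [Matrix.mul_apply]
    have step : ∀ k : Fin n,
        (Matrix.of fun i j => if c i = c j ∧ c i ≤ r then (1 : ℝ) / (s (c i) : ℝ) else 0) i k *
        (Matrix.of fun i j => if c i = c j ∧ c i ≤ r then (1 : ℝ) else 0) k j =
        if c k = c i then (if c i = c j ∧ c i ≤ r then (1 : ℝ) / (s (c i) : ℝ) else 0) else 0 := by
      intro k
      simp only [Matrix.of_apply]
      by_cases h1 : c k = c i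
      · rw [if_pos h1]
        by_cases h2 : c i = c j ∧ c i ≤ r
        · rw [if_pos h2, if_pos ⟨h1.symm, h2.2⟩, if_pos ⟨h1.trans h2.1, h1 ▸ h2.2⟩, mul_one]
        · rw [if_neg h2]
          by_cases h3 : c i = c k ∧ c i ≤ r
          · rw [if_pos h3, if_neg (by rintro ⟨a, b⟩; exact h2 ⟨h1.symm.trans a, h1 ▸ b⟩), mul_zero]
          · rw [if_neg h3, zero_mul]
      · rw [if_neg h1, if_neg (by rintro ⟨a, b⟩; exact h1 a.symm), zero_mul]
    rw [Finset.sum_congr rfl fun k _ => step k, ← Finset.sum_filter, Finset.sum_const,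
      hcount, nsmul_eq_mul]
    simp only [Matrix.of_apply]
    by_cases h2 : c i = c j ∧ c i ≤ r
    · rw [if_pos h2, if_pos h2]
      have hne : ((s (c i) : ℝ)) ≠ 0 := Nat.cast_ne_zero.mpr (hspos (c i)).ne'
      field_simp
    · rw [if_neg h2, if_neg h2, mul_zero]
  have hQYb : (1 - P) * Yb = 0 := by
    rw [Matrix.sub_mul, Matrix.one_mul, hPYb, sub_self]
  set Wpar := P * W + W * P - P * W * P with hWpar
  set Wperp := (1 - P) * W * (1 - P) with hWperp
  have hWdecomp : W = Wpar + Wperp := by rw [hWpar, hWperp]; noncomm_ring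
  have hsplit : mip (Yb - Y) W = mip (Yb - Y) Wpar + mip (Yb - Y) Wperp := by
    conv_lhs => rw [hWdecomp]
    exact mip_add_right _ _ _
  set Z := (1 - P) * Y * (1 - P) with hZdef
  have hconjT : (1 - P)ᴴ = 1 - P := by
    have : (1 - P)ᴴ = (1 - P)ᵀ := by
      ext i j; simp [Matrix.conjTranspose_apply]
    rw [this, hQsymm]
  have hZpsd : Z.PosSemidef := by
    have := hY.1.mul_mul_conjTranspose_same (1 - P)
    rwa [hconjT] at this
  have hperp : mip (Yb - Y) Wperp = - mip Z W := by
    rw [hWperp, mip_conj _ _ _ hQsymm]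
    have : (1 - P) * (Yb - Y) * (1 - P) = -Z := by
      have h0 : (1 - P) * (Yb - Y) = -((1 - P) * Y) := by
        rw [Matrix.mul_sub, hQYb, zero_sub]
      rw [h0, Matrix.neg_mul, hZdef]
    rw [this, mip_neg_left]
  have hsupp : ∀ i j, ¬(c i ≤ r) → ¬(c j ≤ r) → Wpar i j = 0 := by
    intro i j hi hj
    have hProw : ∀ k, P i k = 0 := by
      intro k; subst hP; simp only [Matrix.of_apply]
      exact if_neg fun h => hi h.2
    have hPcol : ∀ k, P k j = 0 := by
      intro k; subst hP; simp only [Matrix.of_apply]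
      exact if_neg fun h : c k = c j ∧ c k ≤ r => hj (h.1 ▸ h.2)
    have h1 : (P * W) i j = 0 := by
      rw [Matrix.mul_apply]
      exact Finset.sum_eq_zero fun k _ => by rw [hProw k, zero_mul]
    have h2 : (W * P) i j = 0 := by
      rw [Matrix.mul_apply]
      exact Finset.sum_eq_zero fun k _ => by rw [hPcol k, mul_zero]
    have h3 : (P * W * P) i j = 0 := by
      rw [Matrix.mul_apply]
      exact Finset.sum_eq_zero fun k _ => by rw [hPcol k, mul_zero]
    rw [hWpar]
    simp [Matrix.sub_apply, Matrix.add_apply, h1, h2, h3]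
  have hparbound : |mip (Yb - Y) Wpar| ≤
      linfNorm Wpar * l1Norm (Matrix.hadamard Jbar (Y - Yb)) := by
    have hterm : ∀ i j, |(Yb - Y) i j * Wpar i j| ≤
        linfNorm Wpar * |(Matrix.hadamard Jbar (Y - Yb)) i j| := by
      intro i j
      by_cases h : c i ≤ r ∨ c j ≤ r
      · have hJ : Jbar i j = 1 := by subst hJbar; simp only [Matrix.of_apply]; exact if_pos h
        rw [abs_mul, Matrix.hadamard_apply, hJ, one_mul]
        have habs : |(Yb - Y) i j| = |(Y - Yb) i j| := by
          rw [← abs_neg]; congr 1; simp [Matrix.sub_apply]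
        rw [habs, mul_comm]
        exact mul_le_mul_of_nonneg_right (entry_le_linf _ _ _) (abs_nonneg _)
      · push_neg at h
        rw [hsupp i j (not_le.mpr h.1) (not_le.mpr h.2), mul_zero, abs_zero]
        exact mul_nonneg (norm_nonneg _) (abs_nonneg _)
    calc |mip (Yb - Y) Wpar| ≤ ∑ i, ∑ j, |(Yb - Y) i j * Wpar i j| := by
          rw [mip]
          exact (Finset.abs_sum_le_sum_abs _ _).trans
            (Finset.sum_le_sum fun i _ => Finset.abs_sum_le_sum_abs _ _)
      _ ≤ ∑ i, ∑ j, linfNorm Wpar * |(Matrix.hadamard Jbar (Y - Yb)) i j| :=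
          Finset.sum_le_sum fun i _ => Finset.sum_le_sum fun j _ => hterm i j
      _ = linfNorm Wpar * l1Norm (Matrix.hadamard Jbar (Y - Yb)) := by
          rw [l1Norm, Finset.mul_sum]
          exact Finset.sum_congr rfl fun i _ => (Finset.mul_sum _ _ _).symm
  calc |mip (Yb - Y) W| = |mip (Yb - Y) Wpar + mip (Yb - Y) Wperp| := by rw [hsplit]
    _ ≤ |mip (Yb - Y) Wpar| + |mip (Yb - Y) Wperp| := abs_add_le _ _
    _ ≤ linfNorm Wpar * l1Norm (Matrix.hadamard Jbar (Y - Yb)) + opNorm W * Z.trace := by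
        refine add_le_add hparbound ?_
        rw [hperp, abs_neg]
        exact mip_psd_le Z W hZpsd
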